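/- (Real meandering theorem, qualitative form) For every pair of natural numbers n ≥ 1 and d there exists a natural number ν = ν(n,d), and for every R > 0 there exists δ = δ(n,d,R) > 0, with the following property. Let v = (v_1,…,v_n) be a polynomial vector field on ℝⁿ with deg v_i ≤ d and all coefficients of all v_i bounded in absolute value by R, let q ∈ ℝⁿ satisfy |q_i| ≤ R for all i, and let γ : (−δ, δ) → ℝⁿ be a solution of the system ẋ = v(x) with γ(0) = q. Then for every affine hyperplane Π ⊆ ℝⁿ, the set { t ∈ (−δ,δ) : γ(t) ∈ Π } has at most ν isolated points. -/

import Mathlib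

open MvPolynomial Set Filter Topology

lemma eval_bound {σ : Type*} (h : MvPolynomial σ ℝ) (r : ℝ) (hr : 0 ≤ r) :
    ∃ C, 0 ≤ C ∧ ∀ x : σ → ℝ, (∀ j, |x j| ≤ r) → |eval x h| ≤ C := by
  induction h using MvPolynomial.induction_on with
  | C a => exact ⟨|a|, abs_nonneg a, fun x _ => by simp⟩
  | add p q hp hq =>
      obtain ⟨C1, hC1, h1⟩ := hp; obtain ⟨C2, hC2, h2⟩ := hq
      refine ⟨C1 + C2, by positivity, fun x hx => ?_⟩
      simp only [map_add]
      exact (abs_add_le _ _).trans (add_le_add (h1 x hx) (h2 x hx))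
  | mul_X p i hp =>
      obtain ⟨C1, hC1, h1⟩ := hp
      refine ⟨C1 * r, by positivity, fun x hx => ?_⟩
      simp only [map_mul, eval_X, abs_mul]
      exact mul_le_mul (h1 x hx) (hx i) (abs_nonneg _) hC1

lemma hasDerivAt_eval_comp {σ : Type*} [Fintype σ] [DecidableEq σ]
    (p : ℝ → σ → ℝ) (w : σ → ℝ) (t : ℝ)
    (hp : ∀ j, HasDerivAt (fun s => p s j) (w j) t) (Q : MvPolynomial σ ℝ) :
    HasDerivAt (fun s => eval (p s) Q) (∑ j, eval (p t) (pderiv j Q) * w j) t := by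
  induction Q using MvPolynomial.induction_on with
  | C a =>
      simp only [eval_C, pderiv_C, map_zero, zero_mul, Finset.sum_const_zero]
      exact hasDerivAt_const t a
  | add q r hq hr =>
      have := hq.add hr
      simp only [map_add] at this ⊢
      refine this.congr_deriv (Eq.symm ?_)
      rw [← Finset.sum_add_distrib]
      congr 1; funext j; ring
  | mul_X q i hq =>
      have key := hq.mul (hp i)
      have heq : (fun s => eval (p s) (q * X i)) = fun s => eval (p s) q * p s i := by
        funext s; simp [map_mul]
      rw [heq]
      refine key.congr_deriv (Eq.symm ?_)
      simp only [pderiv_mul, pderiv_X, map_add, map_mul, eval_X, add_mul]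
      rw [Finset.sum_add_distrib]
      congr 1
      · rw [Finset.sum_mul]; congr 1; funext j; ring
      · rw [Finset.sum_eq_single i]
        · simp
        · intro b _ hb
          simp [Pi.single_apply, hb.symm]  -- pderiv b (X i): Pi.single b 1 i = 0 when b ≠ i
        · intro hi; exact absurd (Finset.mem_univ i) hi

abbrev Sig (n d : ℕ) : Type := (Fin n × (Fin n → Fin (d+1))) ⊕ ((Option (Fin n)) ⊕ (Fin n))

noncomputable def expToFinsupp {n d : ℕ} (e : Fin n → Fin (d+1)) : Fin n →₀ ℕ :=
  Finsupp.equivFunOnFinite.symm (fun i => (e i : ℕ))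

lemma expToFinsupp_inj {n d : ℕ} : Function.Injective (expToFinsupp (n := n) (d := d)) := by
  intro e1 e2 h
  funext i
  have := congrArg (fun m => m i) h
  simp [expToFinsupp] at this
  exact Fin.ext this

noncomputable def genV {n d : ℕ} (j : Fin n) : MvPolynomial (Sig n d) ℝ :=
  ∑ e : Fin n → Fin (d+1), X (Sum.inl (j, e)) * ∏ i, (X (Sum.inr (Sum.inr i)))^((e i : ℕ))

noncomputable def genL {n d : ℕ} : MvPolynomial (Sig n d) ℝ :=
  (∑ i, X (Sum.inr (Sum.inl (some i))) * X (Sum.inr (Sum.inr i))) + X (Sum.inr (Sum.inl none))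

noncomputable def rho {n d : ℕ} (v : Fin n → MvPolynomial (Fin n) ℝ) (c : Fin n → ℝ) (c₀ : ℝ)
    (x : Fin n → ℝ) : Sig n d → ℝ
  | Sum.inl (j, e) => (v j).coeff (expToFinsupp e)
  | Sum.inr (Sum.inl (some i)) => c i
  | Sum.inr (Sum.inl none) => c₀
  | Sum.inr (Sum.inr i) => x i

lemma spec_sum {n d : ℕ} (p : MvPolynomial (Fin n) ℝ) (hdeg : p.totalDegree ≤ d) (x : Fin n → ℝ) :
    ∑ e : Fin n → Fin (d+1), p.coeff (expToFinsupp e) * ∏ i, x i ^ ((e i : ℕ))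
      = eval x p := by
  rw [eval_eq']
  have h1 : ∑ e : Fin n → Fin (d+1), p.coeff (expToFinsupp e) * ∏ i, x i ^ ((e i : ℕ))
      = ∑ m ∈ Finset.univ.image (expToFinsupp (n := n) (d := d)),
          p.coeff m * ∏ i, x i ^ (m i) := by
    rw [Finset.sum_image (fun e1 _ e2 _ h => expToFinsupp_inj h)]
    apply Finset.sum_congr rfl
    intro e _
    simp [expToFinsupp]
  rw [h1]
  symm
  apply Finset.sum_subset
  · intro m hm
    have hle : ∀ i, m i ≤ d := by
      intro i
      have h2 : m i ≤ m.sum fun _ e => e := by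
        by_cases h : m i = 0
        · simp [h]
        · have : i ∈ m.support := Finsupp.mem_support_iff.mpr h
          exact Finset.single_le_sum (fun a _ => Nat.zero_le _) this
      exact h2.trans ((le_totalDegree hm).trans hdeg)
    apply Finset.mem_image.mpr
    refine ⟨fun i => ⟨m i, Nat.lt_succ_of_le (hle i)⟩, Finset.mem_univ _, ?_⟩
    apply Finsupp.ext
    intro i
    simp [expToFinsupp]
  · intro m _ hm
    have : p.coeff m = 0 := by
      by_contra h
      exact hm (MvPolynomial.mem_support_iff.mpr h)
    simp [this]

lemma eval_genV {n d : ℕ} (v : Fin n → MvPolynomial (Fin n) ℝ)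
    (hdeg : ∀ j, (v j).totalDegree ≤ d) (c : Fin n → ℝ) (c₀ : ℝ) (x : Fin n → ℝ) (j : Fin n) :
    eval (rho (d := d) v c c₀ x) (genV j) = eval x (v j) := by
  rw [← spec_sum (v j) (hdeg j) x]
  simp only [genV, map_sum, map_mul, map_prod, map_pow, eval_X]
  rfl

lemma eval_genL {n d : ℕ} (v : Fin n → MvPolynomial (Fin n) ℝ) (c : Fin n → ℝ) (c₀ : ℝ)
    (x : Fin n → ℝ) :
    eval (rho (d := d) v c c₀ x) (genL) = (∑ i, c i * x i) + c₀ := by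
  simp only [genL, map_add, map_sum, map_mul, eval_X]
  rfl
lemma apriori_bound {F : Type*} [NormedAddCommGroup F] [NormedSpace ℝ F]
    (g g' : ℝ → F) (c M Rr : ℝ) (hc : 0 ≤ c) (hR : 0 < Rr) (hM : 0 < M)
    (hMc : M * c ≤ Rr / 2)
    (hg : ∀ t ∈ Icc 0 c, HasDerivAt g (g' t) t)
    (hbound : ∀ t ∈ Icc 0 c, ‖g t - g 0‖ ≤ Rr → ‖g' t‖ ≤ M) :
    ∀ t ∈ Icc 0 c, ‖g t - g 0‖ ≤ Rr / 2 := by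
  have hcont : ContinuousOn g (Icc 0 c) :=
    fun t ht => ((hg t ht).continuousAt).continuousWithinAt
  have key : ∀ t ∈ Icc 0 c, ‖g t - g 0‖ ≤ Rr → ‖g t - g 0‖ ≤ Rr / 2 := by
    intro t ht hb
    -- claim the bound Rr holds on all of [0,t]
    by_cases hall : ∀ s ∈ Icc 0 t, ‖g s - g 0‖ ≤ Rr
    · have hsub : Icc 0 t ⊆ Icc 0 c := Icc_subset_Icc le_rfl ht.2
      have := Convex.norm_image_sub_le_of_norm_hasDerivWithin_le
        (f := g) (f' := g') (s := Icc 0 t) (C := M)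
        (fun x hx => (hg x (hsub hx)).hasDerivWithinAt)
        (fun x hx => hbound x (hsub hx) (hall x hx))
        (convex_Icc 0 t) (left_mem_Icc.mpr ht.1) ⟨ht.1, le_rfl⟩
      calc ‖g t - g 0‖ ≤ M * ‖t - 0‖ := this
        _ = M * t := by rw [sub_zero, Real.norm_eq_abs, abs_of_nonneg ht.1]
        _ ≤ M * c := mul_le_mul_of_nonneg_left ht.2 hM.le
        _ ≤ Rr / 2 := hMc
    · exfalso
      push_neg at hall
      obtain ⟨t₀, ht₀, hbt₀⟩ := hall
      have ht₀c : t₀ ∈ Icc 0 c := ⟨ht₀.1, ht₀.2.trans ht.2⟩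
      set A : Set ℝ := {s | s ∈ Icc 0 c ∧ Rr ≤ ‖g s - g 0‖} with hAdef
      have hAne : A.Nonempty := ⟨t₀, ht₀c, hbt₀.le⟩
      have hAclosed : IsClosed A := by
        have : A = Icc 0 c ∩ (fun s => ‖g s - g 0‖) ⁻¹' (Ici Rr) := by
          ext s; simp [hAdef, and_comm]
        rw [this]
        exact ContinuousOn.preimage_isClosed_of_isClosed
          ((hcont.sub continuousOn_const).norm) isClosed_Icc isClosed_Ici
      have hbdd : BddBelow A := ⟨0, fun s hs => hs.1.1⟩
      set u := sInf A with hu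
      have huA : u ∈ A := hAclosed.csInf_mem hAne hbdd
      have hu0 : 0 < u := by
        rcases lt_or_eq_of_le huA.1.1 with h | h
        · exact h
        · exfalso; have h2 := huA.2; rw [← h] at h2; simp at h2; linarith
      have hlt : ∀ s ∈ Ico 0 u, ‖g s - g 0‖ ≤ Rr := by
        intro s hs
        by_contra hcon
        push_neg at hcon
        have hsA : s ∈ A := ⟨⟨hs.1, hs.2.le.trans huA.1.2⟩, hcon.le⟩
        exact absurd (csInf_le hbdd hsA) (not_le.mpr hs.2)
      have hatu : ‖g u - g 0‖ ≤ Rr := by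
        have hne : (𝓝[Ico 0 u] u).NeBot := by
          rw [← mem_closure_iff_nhdsWithin_neBot, closure_Ico hu0.ne]
          exact ⟨hu0.le, le_rfl⟩
        have htd : Tendsto (fun s => ‖g s - g 0‖) (𝓝[Ico 0 u] u) (𝓝 ‖g u - g 0‖) := by
          have hcw : ContinuousWithinAt (fun s => ‖g s - g 0‖) (Icc 0 c) u :=
            ((hcont.sub continuousOn_const).norm) u huA.1
          exact hcw.tendsto.mono_left
            (nhdsWithin_mono u (fun x hx => ⟨hx.1, hx.2.le.trans huA.1.2⟩))
        exact le_of_tendsto htd (eventually_nhdsWithin_of_forall hlt)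
      have hallu : ∀ s ∈ Icc 0 u, ‖g s - g 0‖ ≤ Rr := by
        intro s hs
        rcases lt_or_eq_of_le hs.2 with h | h
        · exact hlt s ⟨hs.1, h⟩
        · rw [h]; exact hatu
      have hsubu : Icc 0 u ⊆ Icc 0 c := Icc_subset_Icc le_rfl huA.1.2
      have hmvt := Convex.norm_image_sub_le_of_norm_hasDerivWithin_le
        (f := g) (f' := g') (s := Icc 0 u) (C := M)
        (fun x hx => (hg x (hsubu hx)).hasDerivWithinAt)
        (fun x hx => hbound x (hsubu hx) (hallu x hx))
        (convex_Icc 0 u) (left_mem_Icc.mpr hu0.le) ⟨hu0.le, le_rfl⟩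
      have : ‖g u - g 0‖ ≤ Rr / 2 := by
        calc ‖g u - g 0‖ ≤ M * ‖u - 0‖ := hmvt
          _ = M * u := by rw [sub_zero, Real.norm_eq_abs, abs_of_nonneg hu0.le]
          _ ≤ M * c := mul_le_mul_of_nonneg_left huA.1.2 hM.le
          _ ≤ Rr / 2 := hMc
      linarith [huA.2]
  -- bootstrap: show the Rr-bound holds everywhere, then apply key
  intro t ht
  apply key t ht
  by_contra hcon
  push_neg at hcon
  -- Use the closed set argument once more:
  set A : Set ℝ := {s | s ∈ Icc 0 c ∧ Rr ≤ ‖g s - g 0‖} with hAdef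
  have hAne : A.Nonempty := ⟨t, ht, hcon.le⟩
  have hAclosed : IsClosed A := by
    have : A = Icc 0 c ∩ (fun s => ‖g s - g 0‖) ⁻¹' (Ici Rr) := by
      ext s; simp [hAdef, and_comm]
    rw [this]
    exact ContinuousOn.preimage_isClosed_of_isClosed
      ((hcont.sub continuousOn_const).norm) isClosed_Icc isClosed_Ici
  have hbdd : BddBelow A := ⟨0, fun s hs => hs.1.1⟩
  set u := sInf A with hu
  have huA : u ∈ A := hAclosed.csInf_mem hAne hbdd
  have hu0 : 0 < u := by
    rcases lt_or_eq_of_le huA.1.1 with h | h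
    · exact h
    · exfalso; have h2 := huA.2; rw [← h] at h2; simp at h2; linarith
  have hlt : ∀ s ∈ Ico 0 u, ‖g s - g 0‖ ≤ Rr := by
    intro s hs
    by_contra hcon2
    push_neg at hcon2
    have hsA : s ∈ A := ⟨⟨hs.1, hs.2.le.trans huA.1.2⟩, hcon2.le⟩
    exact absurd (csInf_le hbdd hsA) (not_le.mpr hs.2)
  have hatu : ‖g u - g 0‖ ≤ Rr := by
    have hne : (𝓝[Ico 0 u] u).NeBot := by
      rw [← mem_closure_iff_nhdsWithin_neBot, closure_Ico hu0.ne]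
      exact ⟨hu0.le, le_rfl⟩
    have htd : Tendsto (fun s => ‖g s - g 0‖) (𝓝[Ico 0 u] u) (𝓝 ‖g u - g 0‖) := by
      have hcw : ContinuousWithinAt (fun s => ‖g s - g 0‖) (Icc 0 c) u :=
        ((hcont.sub continuousOn_const).norm) u huA.1
      exact hcw.tendsto.mono_left
        (nhdsWithin_mono u (fun x hx => ⟨hx.1, hx.2.le.trans huA.1.2⟩))
    exact le_of_tendsto htd (eventually_nhdsWithin_of_forall hlt)
  have := key u huA.1 hatu
  linarith [huA.2]

lemma list_rolle (g g' : ℝ → ℝ) (a b : ℝ)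
    (hder : ∀ x ∈ Icc a b, HasDerivAt g (g' x) x) :
    ∀ l : List ℝ, l.Pairwise (· < ·) → (∀ x ∈ l, x ∈ Icc a b ∧ g x = 0) →
    ∃ l' : List ℝ, l'.Pairwise (· < ·) ∧ l'.length + 1 = max l.length 1 ∧
      (∀ x ∈ l', x ∈ Icc a b ∧ g' x = 0) ∧
      (∀ x ∈ l', ∀ y ∈ l, l.head? = some y → y < x) := by
  intro l
  induction l with
  | nil => intro _ _; exact ⟨[], List.Pairwise.nil, by simp, by simp, by simp⟩
  | cons t₀ rest ih =>
    intro hsort hmem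
    match rest, hsort, hmem with
    | [], _, _ => exact ⟨[], List.Pairwise.nil, by simp, by simp, by simp⟩
    | t₁ :: rest', hsort, hmem =>
      have hsort' : (t₁ :: rest').Pairwise (· < ·) := hsort.of_cons
      have hmem' : ∀ x ∈ (t₁ :: rest'), x ∈ Icc a b ∧ g x = 0 :=
        fun x hx => hmem x (List.mem_cons_of_mem _ hx)
      obtain ⟨l'', hs'', hlen'', hz'', hgt''⟩ := ih hsort' hmem'
      have ht01 : t₀ < t₁ := (List.pairwise_cons.mp hsort).1 t₁ (by simp)
      have h0 := hmem t₀ (by simp)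
      have h1 := hmem t₁ (by simp [List.mem_cons])
      have hsubI : Icc t₀ t₁ ⊆ Icc a b := Icc_subset_Icc h0.1.1 h1.1.2
      obtain ⟨c, hcI, hc0⟩ := exists_hasDerivAt_eq_zero ht01
        (fun x hx => ((hder x (hsubI hx)).continuousAt).continuousWithinAt)
        (h0.2.trans h1.2.symm)
        (fun x hx => hder x (hsubI (Ioo_subset_Icc_self hx)))
      refine ⟨c :: l'', ?_, ?_, ?_, ?_⟩
      · rw [List.pairwise_cons]
        refine ⟨fun x hx => ?_, hs''⟩
        have := hgt'' x hx t₁ (by simp) (by simp)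
        exact lt_trans hcI.2 this
      · simp only [List.length_cons] at hlen'' ⊢
        rw [max_eq_left (by omega)] at hlen''
        rw [max_eq_left (by omega)]
        omega
      · intro x hx
        rcases List.mem_cons.mp hx with h | h
        · subst h; exact ⟨hsubI (Ioo_subset_Icc_self hcI), hc0⟩
        · exact hz'' x h
      · intro x hx y hy hhy
        simp only [List.head?_cons, Option.some_inj] at hhy
        subst hhy
        rcases List.mem_cons.mp hx with h | h
        · subst h; exact hcI.1
        · exact lt_trans ht01 (hgt'' x h t₁ (by simp) (by simp))

lemma exists_combination {σ : Type*} [Finite σ] (P : ℕ → MvPolynomial σ ℝ) :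
    ∃ (K : ℕ) (h : Fin (K+1) → MvPolynomial σ ℝ),
      ∑ j : Fin (K+1), h j * P (j : ℕ) = P (K+1) := by
  have hnoeth : IsNoetherian (MvPolynomial σ ℝ) (MvPolynomial σ ℝ) :=
    (inferInstance : IsNoetherianRing (MvPolynomial σ ℝ))
  have hmono : Monotone (fun k => Ideal.span (Set.range (fun j : Fin (k+1) => P j))) := by
    intro k m hkm
    apply Ideal.span_mono
    rintro x ⟨j, rfl⟩
    exact ⟨⟨(j : ℕ), by omega⟩, rfl⟩
  obtain ⟨K, hK⟩ := monotone_stabilizes_iff_noetherian.mpr hnoeth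
    ⟨fun k => Ideal.span (Set.range (fun j : Fin (k+1) => P j)), hmono⟩
  have hmem : P (K+1) ∈ Ideal.span (Set.range (fun j : Fin (K+1+1) => P j)) := by
    apply Ideal.subset_span
    exact ⟨⟨K+1, by omega⟩, rfl⟩
  have heq := hK (K+1) (by omega)
  simp only [OrderHom.coe_mk] at heq
  rw [← heq] at hmem
  obtain ⟨h, hh⟩ := (Submodule.mem_span_range_iff_exists_fun (MvPolynomial σ ℝ)).mp hmem
  exact ⟨K, h, by simpa [smul_eq_mul] using hh⟩

noncomputable def genLie {n d : ℕ} (Q : MvPolynomial (Sig n d) ℝ) : MvPolynomial (Sig n d) ℝ :=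
  ∑ i : Fin n, (pderiv (Sum.inr (Sum.inr i)) Q) * genV i

noncomputable def genP {n d : ℕ} : ℕ → MvPolynomial (Sig n d) ℝ := fun k => genLie^[k] genL

lemma genP_zero {n d : ℕ} : genP (n := n) (d := d) 0 = genL := rfl

lemma genP_succ {n d : ℕ} (k : ℕ) :
    genP (n := n) (d := d) (k+1) = genLie (genP k) := Function.iterate_succ_apply' _ _ _

lemma hasDerivAt_traj {n d : ℕ} (v : Fin n → MvPolynomial (Fin n) ℝ)
    (hdeg : ∀ j, (v j).totalDegree ≤ d) (c : Fin n → ℝ) (c₀ : ℝ)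
    (γ : ℝ → Fin n → ℝ) (t : ℝ)
    (hγ : HasDerivAt γ (fun i => eval (γ t) (v i)) t)
    (Q : MvPolynomial (Sig n d) ℝ) :
    HasDerivAt (fun s => eval (rho (d := d) v c c₀ (γ s)) Q)
      (eval (rho (d := d) v c c₀ (γ t)) (genLie Q)) t := by
  classical
  set w : Sig n d → ℝ :=
    Sum.elim (fun _ => 0) (Sum.elim (fun _ => 0) (fun i => eval (γ t) (v i))) with hw
  have hp : ∀ j : Sig n d, HasDerivAt (fun s => rho (d := d) v c c₀ (γ s) j) (w j) t := by
    rintro (⟨j, e⟩ | o | i)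
    · exact hasDerivAt_const t _
    · match o with
      | none => exact hasDerivAt_const t _
      | some i => exact hasDerivAt_const t _
    · exact hasDerivAt_pi.mp hγ i
  have key := hasDerivAt_eval_comp (fun s => rho (d := d) v c c₀ (γ s)) w t hp Q
  convert key using 1
  simp only [genLie, map_sum, map_mul]
  rw [Fintype.sum_sum_type, Fintype.sum_sum_type]
  simp only [hw, Sum.elim_inl, Sum.elim_inr, mul_zero, Finset.sum_const_zero, zero_add]
  apply Finset.sum_congr rfl
  intro i _
  rw [eval_genV v hdeg c c₀ (γ t) i]

set_option maxHeartbeats 2000000 in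
/-- **Real meandering theorem (qualitative form).** For every `n ≥ 1` and `d`
there is `ν = ν(n,d)`, and for every `R > 0` there is `δ = δ(n,d,R) > 0`, such
that every solution `γ : (-δ,δ) → ℝⁿ` of a polynomial system `ẋ = v(x)` of
degree `≤ d` with coefficients and initial condition bounded by `R` meets any
affine hyperplane in at most `ν` isolated points. -/
theorem stmt6 (n d : ℕ) (hn : 1 ≤ n) :
    ∃ ν : ℕ, ∀ R : ℝ, 0 < R → ∃ δ : ℝ, 0 < δ ∧
      ∀ v : Fin n → MvPolynomial (Fin n) ℝ,
        (∀ i, (v i).totalDegree ≤ d) →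
        (∀ (i : Fin n) (m : (Fin n) →₀ ℕ), |(v i).coeff m| ≤ R) →
        ∀ q : Fin n → ℝ, (∀ i, |q i| ≤ R) →
        ∀ γ : ℝ → (Fin n → ℝ), γ 0 = q →
        (∀ t ∈ Set.Ioo (-δ) δ,
          HasDerivAt γ (fun i => MvPolynomial.eval (γ t) (v i)) t) →
        ∀ (c : Fin n → ℝ) (c₀ : ℝ), c ≠ 0 →
        ∀ S : Finset ℝ,
          (∀ t ∈ S, t ∈ Set.Ioo (-δ) δ ∧ (∑ i, c i * γ t i) + c₀ = 0 ∧
            ∃ ε > 0, ∀ s ∈ Set.Ioo (-δ) δ,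
              (∑ i, c i * γ s i) + c₀ = 0 → |s - t| < ε → s = t) →
          S.card ≤ ν := by
  classical
  obtain ⟨K, hfun, hcomb⟩ := exists_combination (genP (n := n) (d := d))
  refine ⟨K + 1, ?_⟩
  intro R hR
  set R' : ℝ := max R 1 with hR'def
  have hR'1 : (1:ℝ) ≤ R' := le_max_right _ _
  have hR'0 : (0:ℝ) < R' := lt_of_lt_of_le one_pos hR'1
  have hRR' : R ≤ R' := le_max_left _ _
  set r : ℝ := 2 * R' with hrdef
  have hr0 : (0:ℝ) ≤ r := by positivity
  have h1r : (1:ℝ) ≤ r := by simp only [hrdef]; linarith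
  choose Cv hCv0 hCv using fun i : Fin n => eval_bound (genV (n := n) (d := d) i) r hr0
  set Mv : ℝ := (∑ i, Cv i) + 1 with hMvdef
  have hCvsum : (0:ℝ) ≤ ∑ i, Cv i := Finset.sum_nonneg fun i _ => hCv0 i
  have hMv1 : (1:ℝ) ≤ Mv := by simp only [hMvdef]; linarith
  have hMv0 : (0:ℝ) < Mv := lt_of_lt_of_le one_pos hMv1
  choose Ch hCh0 hCh using fun k : Fin (K+1) => eval_bound (hfun k) r hr0
  set B : ℝ := (∑ k, Ch k) + 1 with hBdef
  have hChsum : (0:ℝ) ≤ ∑ k, Ch k := Finset.sum_nonneg fun k _ => hCh0 k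
  have hB1 : (1:ℝ) ≤ B := by simp only [hBdef]; linarith
  have hB0 : (0:ℝ) < B := lt_of_lt_of_le one_pos hB1
  have hChB : ∀ k : Fin (K+1), Ch k ≤ B := by
    intro k
    have := Finset.single_le_sum (fun j (_ : j ∈ Finset.univ) => hCh0 j) (Finset.mem_univ k)
    simp only [hBdef]; linarith
  set δ : ℝ := min (min (R' / (2 * Mv)) (1/2)) (1 / (4 * B * (K+1))) with hδdef
  have hδ1 : δ ≤ R' / (2 * Mv) := le_trans (min_le_left _ _) (min_le_left _ _)
  have hδ2 : δ ≤ 1/2 := le_trans (min_le_left _ _) (min_le_right _ _)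
  have hδ3 : δ ≤ 1 / (4 * B * (K+1)) := min_le_right _ _
  have hδ0 : 0 < δ := by
    apply lt_min (lt_min (by positivity) (by norm_num))
    have : (0:ℝ) < 4 * B * (K+1) := by positivity
    positivity
  refine ⟨δ, hδ0, ?_⟩
  intro v hdeg hcoef q hq γ hγ0 hγ c c₀ hc S hS
  by_contra hcard
  push_neg at hcard
  -- normalize (c, c₀)
  set lam : ℝ := max ‖c‖ |c₀| with hlamdef
  have hlam0 : 0 < lam := lt_of_lt_of_le (norm_pos_iff.mpr hc) (le_max_left _ _)
  set c' : Fin n → ℝ := fun i => c i / lam with hc'def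
  set c₀' : ℝ := c₀ / lam with hc₀'def
  have hc'1 : ∀ i, |c' i| ≤ 1 := by
    intro i
    simp only [hc'def, abs_div, abs_of_pos hlam0, div_le_one hlam0]
    exact le_trans (norm_le_pi_norm c i) (le_max_left _ _)
  have hc₀'1 : |c₀'| ≤ 1 := by
    simp only [hc₀'def, abs_div, abs_of_pos hlam0, div_le_one hlam0]
    exact le_max_right _ _
  set f : ℕ → ℝ → ℝ := fun k t => eval (rho (d := d) v c' c₀' (γ t)) (genP k) with hfdef
  have hf0 : ∀ t, lam * f 0 t = (∑ i, c i * γ t i) + c₀ := by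
    intro t
    have h1 : f 0 t = (∑ i, c' i * γ t i) + c₀' := eval_genL v c' c₀' (γ t)
    rw [h1, mul_add, Finset.mul_sum]
    congr 1
    · apply Finset.sum_congr rfl; intro i _
      simp only [hc'def]
      field_simp
    · simp only [hc₀'def]; field_simp
  -- a priori bound on the trajectory
  have hrho : ∀ x : Fin n → ℝ, ‖x‖ ≤ r → ∀ j, |rho (d := d) v c' c₀' x j| ≤ r := by
    intro x hx j
    rcases j with ⟨j, e⟩ | o | i'
    · exact le_trans (hcoef j _) (le_trans hRR' (by simp only [hrdef]; linarith))
    · match o with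
      | none => exact le_trans hc₀'1 h1r
      | some i => exact le_trans (hc'1 i) h1r
    · rw [← Real.norm_eq_abs]
      exact le_trans (norm_le_pi_norm x i') hx
  have hvbound : ∀ x : Fin n → ℝ, ‖x‖ ≤ r → ‖(fun i => eval x (v i))‖ ≤ Mv := by
    intro x hx
    rw [pi_norm_le_iff_of_nonneg hMv0.le]
    intro i
    rw [Real.norm_eq_abs, ← eval_genV v hdeg c' c₀' x i]
    have h2 := hCv i (rho (d := d) v c' c₀' x) (hrho x hx)
    have h3 := Finset.single_le_sum (fun j (_ : j ∈ Finset.univ) => hCv0 j) (Finset.mem_univ i)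
    simp only [hMvdef]; linarith
  have hbox : ∀ t ∈ Ioo (-δ) δ, ‖γ t‖ ≤ r := by
    intro t ht
    have hqn : ‖q‖ ≤ R' := by
      rw [pi_norm_le_iff_of_nonneg hR'0.le]
      intro i; rw [Real.norm_eq_abs]; exact (hq i).trans hRR'
    have key : ‖γ t - q‖ ≤ R' / 2 := by
      rcases le_or_gt 0 t with h0t | h0t
      · -- forward
        have hsub : Icc (0:ℝ) t ⊆ Ioo (-δ) δ := fun s hs =>
          ⟨lt_of_lt_of_le (neg_lt_zero.mpr hδ0) hs.1, lt_of_le_of_lt hs.2 ht.2⟩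
        have := apriori_bound γ (fun s => fun i => eval (γ s) (v i)) t Mv R' h0t hR'0 hMv0
          (by
            have h4 : Mv * t ≤ Mv * (R' / (2*Mv)) :=
              mul_le_mul_of_nonneg_left (le_trans ht.2.le hδ1) hMv0.le
            have h5 : Mv * (R' / (2*Mv)) = R' / 2 := by field_simp
            linarith)
          (fun s hs => hγ s (hsub hs))
          (fun s hs hb => by
            apply hvbound
            rw [hγ0] at hb
            calc ‖γ s‖ = ‖(γ s - q) + q‖ := by ring_nf
              _ ≤ ‖γ s - q‖ + ‖q‖ := norm_add_le _ _
              _ ≤ R' + R' := add_le_add hb hqn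
              _ = r := by simp only [hrdef]; ring)
          t ⟨h0t, le_refl _⟩
        rwa [hγ0] at this
      · -- backward
        have hsub : Icc (0:ℝ) (-t) ⊆ Ioo (-δ) δ := fun s hs =>
          ⟨lt_of_lt_of_le (neg_lt_zero.mpr hδ0) hs.1,
           lt_of_le_of_lt hs.2 (by linarith [ht.1])⟩
        have hneg : ∀ s : ℝ, HasDerivAt (fun u : ℝ => -u) (-1 : ℝ) s := by
          intro s
          exact hasDerivAt_neg s
        have hder : ∀ s ∈ Icc (0:ℝ) (-t),
            HasDerivAt (fun u => γ (-u))
              ((fun u => (-1 : ℝ) • (fun i => eval (γ (-u)) (v i))) s) s := by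
          intro s hs
          exact HasDerivAt.scomp s (hγ (-s) (hsub ⟨hs.1, hs.2⟩ |> fun h => by
            constructor
            · linarith [hs.2, ht.1, hδ0]
            · linarith [hs.1, hδ0])) (hneg s)
        have := apriori_bound (fun u => γ (-u))
          (fun u => (-1 : ℝ) • (fun i => eval (γ (-u)) (v i))) (-t) Mv R'
          (by linarith) hR'0 hMv0
          (by
            have h4 : Mv * (-t) ≤ Mv * (R' / (2*Mv)) :=
              mul_le_mul_of_nonneg_left (le_trans (by linarith [ht.1]) hδ1) hMv0.le
            have h5 : Mv * (R' / (2*Mv)) = R' / 2 := by field_simp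
            linarith)
          hder
          (fun s hs hb => by
            rw [norm_smul]
            simp only [norm_neg, norm_one, one_mul]
            apply hvbound
            have hb' : ‖γ (-s) - q‖ ≤ R' := by simpa [hγ0] using hb
            calc ‖γ (-s)‖ = ‖(γ (-s) - q) + q‖ := by ring_nf
              _ ≤ ‖γ (-s) - q‖ + ‖q‖ := norm_add_le _ _
              _ ≤ R' + R' := add_le_add hb' hqn
              _ = r := by simp only [hrdef]; ring)
          (-t) ⟨by linarith, le_refl _⟩
        simpa [hγ0] using this
    calc ‖γ t‖ = ‖(γ t - q) + q‖ := by ring_nf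
      _ ≤ ‖γ t - q‖ + ‖q‖ := norm_add_le _ _
      _ ≤ R' / 2 + R' := by
          apply add_le_add key
          rw [pi_norm_le_iff_of_nonneg hR'0.le]
          intro i; rw [Real.norm_eq_abs]; exact (hq i).trans hRR'
      _ ≤ r := by simp only [hrdef]; linarith
  -- derivative structure of f
  have hfd : ∀ k : ℕ, ∀ t ∈ Ioo (-δ) δ, HasDerivAt (f k) (f (k+1) t) t := by
    intro k t ht
    have h := hasDerivAt_traj v hdeg c' c₀' γ t (hγ t ht) (genP k)
    rw [← genP_succ] at h
    exact h
  -- S setup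
  have hSne : S.Nonempty := Finset.card_pos.mp (by omega)
  set a : ℝ := S.min' hSne with hadef
  set b : ℝ := S.max' hSne with hbdef
  have haS : a ∈ S := S.min'_mem hSne
  have hbS : b ∈ S := S.max'_mem hSne
  have hab : a < b := S.min'_lt_max'_of_card (by omega)
  have haIoo : a ∈ Ioo (-δ) δ := (hS a haS).1
  have hbIoo : b ∈ Ioo (-δ) δ := (hS b hbS).1
  have habIoo : Icc a b ⊆ Ioo (-δ) δ := fun x hx =>
    ⟨lt_of_lt_of_le haIoo.1 hx.1, lt_of_le_of_lt hx.2 hbIoo.2⟩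
  have haIcc : a ∈ Icc a b := ⟨le_refl _, hab.le⟩
  -- Rolle chain
  have hchain : ∀ j : ℕ, j ≤ K + 1 → ∃ l : List ℝ, l.Pairwise (· < ·) ∧
      K + 2 - j ≤ l.length ∧ ∀ x ∈ l, x ∈ Icc a b ∧ f j x = 0 := by
    intro j
    induction j with
    | zero =>
      intro _
      refine ⟨S.sort (· ≤ ·), (Finset.sortedLT_sort S).pairwise, ?_, ?_⟩
      · rw [Finset.length_sort]; omega
      · intro x hx
        rw [Finset.mem_sort] at hx
        refine ⟨⟨S.min'_le x hx, S.le_max' x hx⟩, ?_⟩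
        have h1 := (hS x hx).2.1
        have h2 := hf0 x
        rw [h1] at h2
        rcases mul_eq_zero.mp h2 with h | h
        · exact absurd h hlam0.ne'
        · exact h
    | succ j ih =>
      intro hj
      obtain ⟨l, hsort, hlen, hmem⟩ := ih (by omega)
      obtain ⟨l', hs', hlen', hz', _⟩ := list_rolle (f j) (f (j+1)) a b
        (fun x hx => hfd j x (habIoo hx)) l hsort hmem
      refine ⟨l', hs', ?_, hz'⟩
      have h1 : 1 ≤ l.length := by omega
      rw [max_eq_left h1] at hlen'
      omega
  -- sup bounds
  set Mf : ℕ → ℝ := fun j => sSup ((fun t => |f j t|) '' Icc a b) with hMfdef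
  have hcontf : ∀ j : ℕ, ContinuousOn (fun t => |f j t|) (Icc a b) := fun j t ht =>
    (((hfd j t (habIoo ht)).continuousAt).continuousWithinAt).abs
  have hbddf : ∀ j : ℕ, BddAbove ((fun t => |f j t|) '' Icc a b) := fun j =>
    (isCompact_Icc.image_of_continuousOn (hcontf j)).bddAbove
  have hMle : ∀ j : ℕ, ∀ t ∈ Icc a b, |f j t| ≤ Mf j := fun j t ht =>
    le_csSup (hbddf j) ⟨t, ht, rfl⟩
  have hMf0 : ∀ j : ℕ, 0 ≤ Mf j := fun j => le_trans (abs_nonneg _) (hMle j a haIcc)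
  have hMub : ∀ (j : ℕ) (X : ℝ), (∀ t ∈ Icc a b, |f j t| ≤ X) → Mf j ≤ X := by
    intro j X h
    refine csSup_le ⟨|f j a|, ⟨a, haIcc, rfl⟩⟩ ?_
    rintro y ⟨t, ht, rfl⟩
    exact h t ht
  have hba0 : (0:ℝ) ≤ b - a := by linarith
  have hba2δ : b - a ≤ 2 * δ := by
    have := haIoo.1; have := hbIoo.2; linarith
  have hba1 : b - a ≤ 1 := by linarith
  -- step inequality
  have hstep : ∀ j : ℕ, j ≤ K → Mf j ≤ (b - a) * Mf (j+1) := by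
    intro j hj
    obtain ⟨l, _, hlen, hmem⟩ := hchain j (by omega)
    have hlp : 0 < l.length := by omega
    obtain ⟨x, hx⟩ := List.exists_mem_of_length_pos hlp
    obtain ⟨hxI, hxz⟩ := hmem x hx
    apply hMub
    intro t ht
    have hmvt := Convex.norm_image_sub_le_of_norm_hasDerivWithin_le
      (f := f j) (f' := f (j+1)) (s := Icc a b) (C := Mf (j+1))
      (fun y hy => (hfd j y (habIoo hy)).hasDerivWithinAt)
      (fun y hy => by rw [Real.norm_eq_abs]; exact hMle (j+1) y hy)
      (convex_Icc a b) hxI ht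
    rw [Real.norm_eq_abs, Real.norm_eq_abs, hxz, sub_zero] at hmvt
    calc |f j t| ≤ Mf (j+1) * |t - x| := hmvt
      _ ≤ Mf (j+1) * (b - a) := by
          apply mul_le_mul_of_nonneg_left _ (hMf0 (j+1))
          rw [abs_le]
          constructor
          · linarith [ht.1, hxI.2]
          · linarith [ht.2, hxI.1]
      _ = (b - a) * Mf (j+1) := by ring
  -- geometric decay
  have hgeom : ∀ i j : ℕ, j + i = K + 1 → Mf j ≤ (b - a)^i * Mf (K+1) := by
    intro i
    induction i with
    | zero =>
      intro j hj
      have : j = K + 1 := by omega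
      subst this
      simp
    | succ i ih =>
      intro j hj
      have h2 := hstep j (by omega)
      have h3 := ih (j+1) (by omega)
      calc Mf j ≤ (b - a) * Mf (j+1) := h2
        _ ≤ (b - a) * ((b - a)^i * Mf (K+1)) := mul_le_mul_of_nonneg_left h3 hba0
        _ = (b - a)^(i+1) * Mf (K+1) := by ring
  -- the linear ODE identity
  have hid : ∀ t : ℝ, f (K+1) t =
      ∑ k : Fin (K+1), eval (rho (d := d) v c' c₀' (γ t)) (hfun k) * f (k : ℕ) t := by
    intro t
    have h := congrArg (eval (rho (d := d) v c' c₀' (γ t))) hcomb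
    simp only [map_sum, map_mul] at h
    exact h.symm
  -- final contraction bound
  have hKp : Mf (K+1) ≤ B * ((K+1) * ((b-a) * Mf (K+1))) := by
    apply hMub
    intro t ht
    rw [hid t]
    calc |∑ k : Fin (K+1), eval (rho (d := d) v c' c₀' (γ t)) (hfun k) * f (k : ℕ) t|
        ≤ ∑ k : Fin (K+1), |eval (rho (d := d) v c' c₀' (γ t)) (hfun k) * f (k : ℕ) t| :=
          Finset.abs_sum_le_sum_abs _ _
      _ ≤ ∑ k : Fin (K+1), B * ((b-a) * Mf (K+1)) := by
          apply Finset.sum_le_sum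
          intro k _
          rw [abs_mul]
          have he1 : |eval (rho (d := d) v c' c₀' (γ t)) (hfun k)| ≤ B := by
            refine le_trans (hCh k _ (hrho (γ t) (hbox t (habIoo ht)))) (hChB k)
          have he2 : |f (k : ℕ) t| ≤ (b-a) * Mf (K+1) := by
            have h4 := hMle (k : ℕ) t ht
            have h5 := hgeom (K + 1 - (k : ℕ)) (k : ℕ) (by omega)
            have h6 : (b-a)^(K + 1 - (k : ℕ)) ≤ b - a := by
              have h7 : (b-a)^(K + 1 - (k : ℕ)) ≤ (b-a)^1 :=
                pow_le_pow_of_le_one hba0 hba1 (by omega)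
              simpa using h7
            have h8 : (b-a)^(K + 1 - (k : ℕ)) * Mf (K+1) ≤ (b - a) * Mf (K+1) :=
              mul_le_mul_of_nonneg_right h6 (hMf0 _)
            linarith
          exact mul_le_mul he1 he2 (abs_nonneg _) hB0.le
      _ = B * ((K+1) * ((b-a) * Mf (K+1))) := by
          rw [Finset.sum_const, Finset.card_univ, Fintype.card_fin, nsmul_eq_mul]
          push_cast
          ring
  have hMz : Mf (K+1) = 0 := by
    have hBK : (0:ℝ) < B * (K+1) := by positivity
    have h2δ : b - a ≤ 1 / (2 * B * (K+1)) := by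
      have h1 : (2:ℝ) * δ ≤ 2 * (1 / (4 * B * (K+1))) := by linarith
      have h2 : (2:ℝ) * (1 / (4 * B * (K+1))) = 1 / (2 * B * (K+1)) := by
        field_simp; ring
      linarith
    have e1 : B * ((K+1 : ℝ) * (b - a)) ≤ 1/2 := by
      have h3 : ((K:ℝ)+1) * (b-a) ≤ ((K:ℝ)+1) * (1 / (2 * B * (K+1))) :=
        mul_le_mul_of_nonneg_left h2δ (by positivity)
      have h4 : ((K:ℝ)+1) * (1 / (2 * B * ((K:ℝ)+1))) = 1 / (2 * B) := by
        field_simp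
      rw [h4] at h3
      have h5 : B * (((K:ℝ)+1) * (b-a)) ≤ B * (1 / (2 * B)) :=
        mul_le_mul_of_nonneg_left h3 hB0.le
      have h6 : B * (1 / (2 * B)) = 1/2 := by field_simp
      linarith
    have h7 : B * ((K+1 : ℝ) * ((b-a) * Mf (K+1))) = (B * ((K+1 : ℝ) * (b-a))) * Mf (K+1) := by
      ring
    have h8 : (B * ((K+1 : ℝ) * (b-a))) * Mf (K+1) ≤ (1/2) * Mf (K+1) :=
      mul_le_mul_of_nonneg_right e1 (hMf0 _)
    have h9 := hKp
    rw [h7] at h9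
    have h10 : Mf (K+1) ≤ (1/2) * Mf (K+1) := le_trans h9 h8
    have := hMf0 (K+1)
    linarith
  have hM0z : Mf 0 = 0 := by
    have h1 := hgeom (K+1) 0 (by omega)
    rw [hMz, mul_zero] at h1
    exact le_antisymm h1 (hMf0 0)
  have hf0zero : ∀ t ∈ Icc a b, f 0 t = 0 := by
    intro t ht
    have := hMle 0 t ht
    rw [hM0z] at this
    exact abs_eq_zero.mp (le_antisymm this (abs_nonneg _))
  -- contradiction with isolation at a
  obtain ⟨haIoo', hza, ε, hε, hiso⟩ := hS a haS
  set s : ℝ := min (a + ε/2) ((a+b)/2) with hsdef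
  have hs1 : a < s := lt_min (by linarith) (by linarith)
  have hs2 : s ≤ (a+b)/2 := min_le_right _ _
  have hsb : s ≤ b := by linarith
  have hsI : s ∈ Icc a b := ⟨hs1.le, hsb⟩
  have hsIoo : s ∈ Ioo (-δ) δ := habIoo hsI
  have hforig : (∑ i, c i * γ s i) + c₀ = 0 := by
    rw [← hf0 s, hf0zero s hsI, mul_zero]
  have hdist : |s - a| < ε := by
    rw [abs_of_nonneg (by linarith)]
    have := min_le_left (a + ε/2) ((a+b)/2)
    linarith
  have := hiso s hsIoo hforig hdist
  exact absurd this hs1.ne'
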